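/- Attainment and interval structure of the contact set (abstract form of Lemma 6, characterizing the Gittins rank): let h ≥ 0 and let J : ℝ → ℝ be concave on Set.Ici (0:ℝ), continuous on Set.Ici (0:ℝ), with J 0 = 0 and J r ≤ h * r for all r ≥ 0. Let S = {r : ℝ | 0 ≤ r ∧ J r = h * r}. Then either S = Set.Ici 0, or S is bounded above, sSup S ∈ S, and S = Set.Icc 0 (sSup S). In particular, when S is bounded above, the supremum max {r ≥ 0 | J r = h * r} is attained. -/

import Mathlib

/-- Attainment and interval structure of the contact set (abstract Lemma 6,
characterizing the Gittins rank): the contact set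
`S = {r | 0 ≤ r ∧ J r = h * r}` is either all of `[0, ∞)`, or it is bounded above,
contains its supremum, and equals the interval `[0, sSup S]`. -/
theorem gittins_contact_set_interval
    (h : ℝ) (hh : 0 ≤ h) (J : ℝ → ℝ)
    (hconc : ConcaveOn ℝ (Set.Ici (0 : ℝ)) J)
    (hcont : ContinuousOn J (Set.Ici (0 : ℝ)))
    (hJ0 : J 0 = 0)
    (hle : ∀ r : ℝ, 0 ≤ r → J r ≤ h * r) :
    (({r : ℝ | 0 ≤ r ∧ J r = h * r}) = Set.Ici (0 : ℝ)) ∨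
      (BddAbove {r : ℝ | 0 ≤ r ∧ J r = h * r} ∧
        sSup {r : ℝ | 0 ≤ r ∧ J r = h * r} ∈ {r : ℝ | 0 ≤ r ∧ J r = h * r} ∧
        ({r : ℝ | 0 ≤ r ∧ J r = h * r}) =
          Set.Icc 0 (sSup {r : ℝ | 0 ≤ r ∧ J r = h * r})) := by
  set S := {r : ℝ | 0 ≤ r ∧ J r = h * r} with hS
  have h0S : (0 : ℝ) ∈ S := ⟨le_refl 0, by simp [hJ0]⟩
  have hSsub : S ⊆ Set.Ici (0 : ℝ) := fun x hx => hx.1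
  -- downward closure
  have hdown : ∀ r ∈ S, ∀ s, 0 ≤ s → s ≤ r → s ∈ S := by
    intro r hr s hs hsr
    rcases eq_or_lt_of_le (hs.trans hsr) with hr0 | hr0
    · have : s = 0 := le_antisymm (hsr.trans hr0.symm.le) hs
      simpa [this] using h0S
    · have ht0 : 0 ≤ s / r := div_nonneg hs hr0.le
      have ht1 : s / r ≤ 1 := (div_le_one hr0).2 hsr
      have key := hconc.2 (Set.mem_Ici.2 (le_refl 0)) (Set.mem_Ici.2 hr0.le)
        (by linarith : (0:ℝ) ≤ 1 - s / r) ht0 (by ring)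
      have hsr' : (1 - s / r) • (0:ℝ) + (s / r) • r = s := by
        simp only [smul_eq_mul]
        field_simp [hr0.ne']
        ring
      rw [hsr'] at key
      have hJr : J r = h * r := hr.2
      have hge : h * s ≤ J s := by
        have : (1 - s / r) • J 0 + (s / r) • J r = h * s := by
          rw [hJ0, hJr]
          simp only [smul_eq_mul]
          field_simp [hr0.ne']
          ring
        linarith [key, this.symm ▸ key]
      exact ⟨hs, le_antisymm (hle s hs) hge⟩
  by_cases hbdd : BddAbove S
  · right
    have hne : S.Nonempty := ⟨0, h0S⟩
    have hM0 : 0 ≤ sSup S := le_csSup hbdd h0S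
    have hMS : sSup S ∈ S := by
      have hMcl : sSup S ∈ closure S := csSup_mem_closure hne hbdd
      have hnb : (nhdsWithin (sSup S) S).NeBot :=
        mem_closure_iff_nhdsWithin_neBot.1 hMcl
      have hc1 : Filter.Tendsto J (nhdsWithin (sSup S) S) (nhds (J (sSup S))) :=
        (hcont (sSup S) (Set.mem_Ici.2 hM0)).mono_of_mem_nhdsWithin
          (nhdsWithin_mono _ hSsub self_mem_nhdsWithin)
      have hc2 : Filter.Tendsto J (nhdsWithin (sSup S) S) (nhds (h * sSup S)) := by
        have : Filter.Tendsto (fun r : ℝ => h * r) (nhdsWithin (sSup S) S)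
            (nhds (h * sSup S)) :=
          ((continuous_const.mul continuous_id).tendsto _).mono_left
            nhdsWithin_le_nhds
        refine this.congr' ?_
        filter_upwards [self_mem_nhdsWithin] with r hr
        exact hr.2.symm
      exact ⟨hM0, tendsto_nhds_unique hc1 hc2⟩
    refine ⟨hbdd, hMS, ?_⟩
    ext x
    constructor
    · exact fun hx => ⟨hx.1, le_csSup hbdd hx⟩
    · exact fun hx => hdown _ hMS x hx.1 hx.2
  · left
    ext x
    simp only [Set.mem_Ici]
    constructor
    · exact fun hx => hx.1
    · intro hx
      obtain ⟨r, hrS, hxr⟩ : ∃ r ∈ S, x ≤ r := by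
        by_contra hcon
        push_neg at hcon
        exact hbdd ⟨x, fun y hy => (hcon y hy).le⟩
      exact hdown r hrS x hx hxr
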